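/- Let R > 0, let ψ̄ : ℝ² × ℝ → ℝ be twice continuously differentiable in the spatial variables, let ξ̄, ν : ℝ² × ℝ → ℝ be continuously differentiable with ∂_t ξ̄ + [ψ̄, ξ̄] = R⁻²[ψ̄, ν] and ∂_t ν + [ψ̄, ν] = 0 everywhere, and let F, G : ℝ → ℝ be continuously differentiable with G′ = F. Then the density ξ̄·F(ν) satisfies the local conservation law ∂_t(ξ̄ F(ν)) + div((ξ̄ F(ν) − R⁻² G(ν)) ∇⊥ψ̄) = 0 at every point. -/

import Mathlib

noncomputable section

/-- Partial derivative in the first spatial coordinate. -/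
def pdx (f : ℝ × ℝ → ℝ) (p : ℝ × ℝ) : ℝ := fderiv ℝ f p ((1 : ℝ), (0 : ℝ))

/-- Partial derivative in the second spatial coordinate. -/
def pdy (f : ℝ × ℝ → ℝ) (p : ℝ × ℝ) : ℝ := fderiv ℝ f p ((0 : ℝ), (1 : ℝ))

/-- The Jacobian (canonical Poisson) bracket `[a,b] = a_x b_y - a_y b_x`. -/
def jb (a b : ℝ × ℝ → ℝ) (p : ℝ × ℝ) : ℝ := pdx a p * pdy b p - pdy a p * pdx b p

/-- Perpendicular gradient `∇⊥ψ = (-ψ_y, ψ_x)`. -/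
def pgrad (ψ : ℝ × ℝ → ℝ) (p : ℝ × ℝ) : ℝ × ℝ := (-(pdy ψ p), pdx ψ p)

/-- Gradient `∇ψ = (ψ_x, ψ_y)`. -/
def grad2 (ψ : ℝ × ℝ → ℝ) (p : ℝ × ℝ) : ℝ × ℝ := (pdx ψ p, pdy ψ p)

/-- Divergence of a planar vector field. -/
def div2 (v : ℝ × ℝ → ℝ × ℝ) (p : ℝ × ℝ) : ℝ :=
  pdx (fun q => (v q).1) p + pdy (fun q => (v q).2) p

/-- Laplacian of a scalar field. -/
def lap2 (ψ : ℝ × ℝ → ℝ) (p : ℝ × ℝ) : ℝ := pdx (pdx ψ) p + pdy (pdy ψ) p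

/-- Time derivative of a time-dependent field on ℝ² × ℝ. -/
def pdt (f : (ℝ × ℝ) × ℝ → ℝ) (z : (ℝ × ℝ) × ℝ) : ℝ :=
  fderiv ℝ f z ((0 : ℝ × ℝ), (1 : ℝ))

/-- Jacobian bracket of time-dependent fields, acting in the spatial variables at fixed time. -/
def jbt (a b : (ℝ × ℝ) × ℝ → ℝ) (z : (ℝ × ℝ) × ℝ) : ℝ :=
  jb (fun q => a (q, z.2)) (fun q => b (q, z.2)) z.1

/-- local conservation law for the weak Casimir density `ξ̄ F(ν)`. -/
theorem weak_casimir_local_conservation_law (R : ℝ) (hR : 0 < R)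
    (ψbar ξbar ν : (ℝ × ℝ) × ℝ → ℝ)
    (hψbar : ∀ t : ℝ, ContDiff ℝ 2 (fun q : ℝ × ℝ => ψbar (q, t)))
    (hξbar : ContDiff ℝ 1 ξbar) (hν : ContDiff ℝ 1 ν)
    (heq1 : ∀ z : (ℝ × ℝ) × ℝ, pdt ξbar z + jbt ψbar ξbar z = (R ^ 2)⁻¹ * jbt ψbar ν z)
    (heq2 : ∀ z : (ℝ × ℝ) × ℝ, pdt ν z + jbt ψbar ν z = 0)
    (F G : ℝ → ℝ) (hF : ContDiff ℝ 1 F) (hG : ContDiff ℝ 1 G)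
    (hG' : ∀ s : ℝ, HasDerivAt G (F s) s)
    (z : (ℝ × ℝ) × ℝ) :
    pdt (fun w => ξbar w * F (ν w)) z
      + div2 (fun q => (ξbar (q, z.2) * F (ν (q, z.2)) - (R ^ 2)⁻¹ * G (ν (q, z.2))) •
          pgrad (fun q' => ψbar (q', z.2)) q) z.1 = 0 := by
  obtain ⟨p, t⟩ := z
  simp only [div2, pgrad, pdt, pdx, pdy] at *
  -- spatial slice of ψ
  set ψt : ℝ × ℝ → ℝ := fun q => ψbar (q, t) with hψtdef
  have hψ : ContDiff ℝ 2 ψt := hψbar t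
  have hψd : Differentiable ℝ ψt := hψ.differentiable two_ne_zero
  have hψ1 : ContDiff ℝ 1 (fderiv ℝ ψt) := by
    have h2 : ContDiff ℝ ((1 : WithTop ℕ∞) + 1) ψt := by norm_num; exact hψ
    exact (contDiff_succ_iff_fderiv.mp h2).2.2
  set H := fderiv ℝ (fderiv ℝ ψt) p with hHdef
  have hH : HasFDerivAt (fderiv ℝ ψt) H p := (hψ1.differentiable one_ne_zero p).hasFDerivAt
  have hsymm : ∀ v w, H v w = H w v :=
    second_derivative_symmetric (fun y => (hψd y).hasFDerivAt) hH
  set e1 : ℝ × ℝ := ((1 : ℝ), (0 : ℝ)) with he1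
  set e2 : ℝ × ℝ := ((0 : ℝ), (1 : ℝ)) with he2
  -- derivatives of ψ slices
  have hψx : HasFDerivAt (fun q => fderiv ℝ ψt q e1)
      ((ContinuousLinearMap.apply ℝ ℝ e1).comp H) p :=
    ((ContinuousLinearMap.apply ℝ ℝ e1).hasFDerivAt).comp p hH
  have hψy : HasFDerivAt (fun q => fderiv ℝ ψt q e2)
      ((ContinuousLinearMap.apply ℝ ℝ e2).comp H) p :=
    ((ContinuousLinearMap.apply ℝ ℝ e2).hasFDerivAt).comp p hH
  -- derivatives of ξ, ν and their slices
  set Dξ := fderiv ℝ ξbar (p, t) with hDξ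
  set Dν := fderiv ℝ ν (p, t) with hDν
  have hξ' : HasFDerivAt ξbar Dξ (p, t) := (hξbar.differentiable one_ne_zero (p, t)).hasFDerivAt
  have hν' : HasFDerivAt ν Dν (p, t) := (hν.differentiable one_ne_zero (p, t)).hasFDerivAt
  set J : (ℝ × ℝ) →L[ℝ] (ℝ × ℝ) × ℝ :=
    (ContinuousLinearMap.id ℝ (ℝ × ℝ)).prod (0 : (ℝ × ℝ) →L[ℝ] ℝ) with hJdef
  have hJ : HasFDerivAt (fun q : ℝ × ℝ => (q, t)) J p :=
    HasFDerivAt.prodMk (hasFDerivAt_id p) (hasFDerivAt_const t p)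
  have hξs : HasFDerivAt (fun q => ξbar (q, t)) (Dξ.comp J) p := hξ'.comp p hJ
  have hνs : HasFDerivAt (fun q => ν (q, t)) (Dν.comp J) p := hν'.comp p hJ
  -- chain rule for F, G composed with ν
  set F' : ℝ := deriv F (ν (p, t)) with hF'
  have hFd : HasDerivAt F F' (ν (p, t)) := (hF.differentiable one_ne_zero (ν (p, t))).hasDerivAt
  have hFνs : HasFDerivAt (fun q => F (ν (q, t))) (F' • (Dν.comp J)) p :=
    hFd.comp_hasFDerivAt p hνs
  have hGνs : HasFDerivAt (fun q => G (ν (q, t))) (F (ν (p, t)) • (Dν.comp J)) p :=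
    (hG' (ν (p, t))).comp_hasFDerivAt p hνs
  have hFν : HasFDerivAt (fun w => F (ν w)) (F' • Dν) (p, t) :=
    hFd.comp_hasFDerivAt (p, t) hν'
  -- derivative of the density in space-time
  have hprodt : HasFDerivAt (fun w => ξbar w * F (ν w))
      (ξbar (p, t) • (F' • Dν) + F (ν (p, t)) • Dξ) (p, t) := hξ'.mul hFν
  -- derivative of the flux scalar s
  set Ds : (ℝ × ℝ) →L[ℝ] ℝ :=
    (ξbar (p, t) • (F' • (Dν.comp J)) + F (ν (p, t)) • (Dξ.comp J))
      - (R ^ 2)⁻¹ • (F (ν (p, t)) • (Dν.comp J)) with hDsdef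
  have hs : HasFDerivAt
      (fun q => ξbar (q, t) * F (ν (q, t)) - (R ^ 2)⁻¹ * G (ν (q, t))) Ds p :=
    (hξs.mul hFνs).sub (hGνs.const_mul _)
  -- components of the flux vector field
  have hv1 : HasFDerivAt
      (fun q => (ξbar (q, t) * F (ν (q, t)) - (R ^ 2)⁻¹ * G (ν (q, t)))
        * (-(fderiv ℝ ψt q e2)))
      ((ξbar (p, t) * F (ν (p, t)) - (R ^ 2)⁻¹ * G (ν (p, t))) •
          (-((ContinuousLinearMap.apply ℝ ℝ e2).comp H)) + (-(fderiv ℝ ψt p e2)) • Ds) p :=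
    hs.mul hψy.neg
  have hv2 : HasFDerivAt
      (fun q => (ξbar (q, t) * F (ν (q, t)) - (R ^ 2)⁻¹ * G (ν (q, t)))
        * (fderiv ℝ ψt q e1))
      ((ξbar (p, t) * F (ν (p, t)) - (R ^ 2)⁻¹ * G (ν (p, t))) •
          ((ContinuousLinearMap.apply ℝ ℝ e1).comp H) + (fderiv ℝ ψt p e1) • Ds) p :=
    hs.mul hψx
  -- rewrite goal using smul on pairs
  have goal_shape :
      (fun q : ℝ × ℝ =>
          (((ξbar (q, t) * F (ν (q, t)) - (R ^ 2)⁻¹ * G (ν (q, t))) •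
            (-(fderiv ℝ ψt q e2), fderiv ℝ ψt q e1) : ℝ × ℝ)).1)
        = fun q => (ξbar (q, t) * F (ν (q, t)) - (R ^ 2)⁻¹ * G (ν (q, t)))
            * (-(fderiv ℝ ψt q e2)) := by
    funext q; simp [smul_eq_mul]
  have goal_shape2 :
      (fun q : ℝ × ℝ =>
          (((ξbar (q, t) * F (ν (q, t)) - (R ^ 2)⁻¹ * G (ν (q, t))) •
            (-(fderiv ℝ ψt q e2), fderiv ℝ ψt q e1) : ℝ × ℝ)).2)
        = fun q => (ξbar (q, t) * F (ν (q, t)) - (R ^ 2)⁻¹ * G (ν (q, t)))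
            * (fderiv ℝ ψt q e1) := by
    funext q; simp [smul_eq_mul]
  rw [goal_shape, goal_shape2, hprodt.fderiv, hv1.fderiv, hv2.fderiv]
  -- specialize the evolution equations
  have h1 := heq1 (p, t)
  have h2 := heq2 (p, t)
  simp only [jbt, jb, pdt, pdx, pdy] at h1 h2
  rw [hξs.fderiv, hνs.fderiv, hξ'.fderiv] at h1
  rw [hνs.fderiv, hν'.fderiv] at h2
  simp only [← hψtdef, ← he1, ← he2] at h1 h2
  simp only [hDsdef, hJdef, ContinuousLinearMap.add_apply, ContinuousLinearMap.smul_apply,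
    ContinuousLinearMap.comp_apply, ContinuousLinearMap.coe_sub', Pi.sub_apply,
    ContinuousLinearMap.neg_apply, ContinuousLinearMap.prod_apply,
    ContinuousLinearMap.coe_id', id_eq, ContinuousLinearMap.zero_apply,
    ContinuousLinearMap.apply_apply, smul_eq_mul] at h1 h2 ⊢
  have hsy := hsymm e1 e2
  linear_combination (F (ν (p, t))) * h1 + (ξbar (p, t) * F') * h2
    - (ξbar (p, t) * F (ν (p, t)) - (R ^ 2)⁻¹ * G (ν (p, t))) * hsy
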